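/- The DMT ndao for disjunctive programs is upwards coherent: for any disjunctive aggregate program P and any x ⊆ y ⊆ A, HD^{DMT,l}_P(x,y) ⊆ HD^{DMT,u}_P(x,y), and consequently IC^{DMT,l}_P(x,y) ⪯^S IC^{DMT,u}_P(x,y): for every z ∈ IC^{DMT,u}_P(x,y), the set z ∩ ⋃HD^{DMT,l}_P(x,y) belongs to IC^{DMT,l}_P(x,y) and is ⊆ z. -/
import Mathlib


def smyth {L : Type*} [Lattice L] (X Y : Set L) : Prop :=
  ∀ y ∈ Y, ∃ x ∈ X, x ≤ y

def HDdmtL {A : Type*} (HD : Set A → Set (Set A)) (x y : Set A) : Set (Set A) :=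
  {Δ | ∀ z : Set A, x ⊆ z → z ⊆ y → Δ ∈ HD z}

def HDdmtU {A : Type*} (HD : Set A → Set (Set A)) (x y : Set A) : Set (Set A) :=
  {Δ | ∃ z : Set A, x ⊆ z ∧ z ⊆ y ∧ Δ ∈ HD z}

def ICd {A : Type*} (H : Set (Set A)) : Set (Set A) :=
  {w | w ⊆ ⋃₀ H ∧ ∀ Δ ∈ H, (w ∩ Δ).Nonempty}

theorem DMT_upwards_coherent {A : Type*} [Fintype A]
    (HD : Set A → Set (Set A)) (x y : Set A) (hxy : x ⊆ y) :
    HDdmtL HD x y ⊆ HDdmtU HD x y ∧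
    (∀ w ∈ ICd (HDdmtU HD x y),
      w ∩ ⋃₀ HDdmtL HD x y ∈ ICd (HDdmtL HD x y) ∧ w ∩ ⋃₀ HDdmtL HD x y ⊆ w) ∧
    smyth (ICd (HDdmtL HD x y)) (ICd (HDdmtU HD x y)) := by
  have hsub : HDdmtL HD x y ⊆ HDdmtU HD x y := by
    intro Δ hΔ
    exact ⟨x, subset_rfl, hxy, hΔ x subset_rfl hxy⟩
  have key : ∀ w ∈ ICd (HDdmtU HD x y),
      w ∩ ⋃₀ HDdmtL HD x y ∈ ICd (HDdmtL HD x y) ∧ w ∩ ⋃₀ HDdmtL HD x y ⊆ w := by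
    intro w hw
    refine ⟨⟨fun a ha => ha.2, ?_⟩, fun a ha => ha.1⟩
    intro Δ hΔ
    obtain ⟨a, haw, haΔ⟩ := hw.2 Δ (hsub hΔ)
    exact ⟨a, ⟨haw, ⟨Δ, hΔ, haΔ⟩⟩, haΔ⟩
  exact ⟨hsub, key, fun w hw => ⟨_, (key w hw).1, (key w hw).2⟩⟩
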